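/- arXiv:0706.0534 — 2 statements merged into one kernel-verified Lean document; each statement's English description precedes it below -/
import Mathlib

section
/- Let X be an n × p matrix and S ⊆ {1,…,p} nonempty with complement Sᶜ. If X is S-incoherent, i.e. ‖(1/n) X_{Sᶜ}ᵀ X_S‖_∞ + ‖(1/n) X_Sᵀ X_S − I_{|S|}‖_∞ ≤ 1 − η for some η ∈ (0,1], then ‖X_{Sᶜ}ᵀ X_S (X_Sᵀ X_S)⁻¹‖_∞ ≤ 1 − η. -/
open scoped BigOperators
open Matrix

attribute [local instance] Matrix.linftyOpNormedAddCommGroup Matrix.linftyOpNormedRing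

/-- The matrix ∞-norm (maximum absolute row sum); the supremum over an empty
index type is `0`. -/
noncomputable def infNorm {α β : Type*} [Fintype α] [Fintype β]
    (A : Matrix α β ℝ) : ℝ := ⨆ i, ∑ j, |A i j|

lemma infNorm_eq_norm {α β : Type*} [Fintype α] [Fintype β] (A : Matrix α β ℝ) :
    infNorm A = ‖A‖ := by
  rcases isEmpty_or_nonempty α with h | h
  · have hA : A = 0 := Subsingleton.elim _ _
    simp [infNorm, hA, Real.iSup_of_isEmpty]
  · rw [infNorm, Matrix.linfty_opNorm_def,
      ← Finset.sup'_eq_sup Finset.univ_nonempty (fun i : α => ∑ j : β, ‖A i j‖₊),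
      ← Finset.sup'_univ_eq_ciSup]
    rw [Finset.comp_sup'_eq_sup'_comp (f := fun i : α => ∑ j : β, ‖A i j‖₊)
      Finset.univ_nonempty NNReal.toReal (fun x y => by simp [NNReal.coe_max])]
    congr 1
    funext i
    simp [Function.comp, NNReal.coe_sum, Real.norm_eq_abs]

/-- S-incoherence implies `‖X_{Sᶜ}ᵀ X_S (X_Sᵀ X_S)⁻¹‖_∞ ≤ 1 − η`. -/
theorem incoherence_implies_irrepresentable {n p : ℕ}
    (X : Matrix (Fin n) (Fin p) ℝ) (S : Finset (Fin p)) (hS : S.Nonempty)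
    (η : ℝ) (hη : 0 < η) (hη1 : η ≤ 1)
    (XS : Matrix (Fin n) {j // j ∈ S} ℝ)
    (XSc : Matrix (Fin n) {j // j ∈ Sᶜ} ℝ)
    (hXS : ∀ i j, XS i j = X i j) (hXSc : ∀ i j, XSc i j = X i j)
    (hinc : infNorm ((1 / (n : ℝ)) • (XScᵀ * XS)) +
        infNorm ((1 / (n : ℝ)) • (XSᵀ * XS) - 1) ≤ 1 - η) :
    infNorm (XScᵀ * XS * (XSᵀ * XS)⁻¹) ≤ 1 - η := by
  haveI : Nonempty {j // j ∈ S} := ⟨⟨hS.choose, hS.choose_spec⟩⟩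
  rw [infNorm_eq_norm] at hinc ⊢
  set A : Matrix {j // j ∈ S} {j // j ∈ S} ℝ := (1 / (n : ℝ)) • (XSᵀ * XS) with hA
  set B : Matrix {j // j ∈ Sᶜ} {j // j ∈ S} ℝ := (1 / (n : ℝ)) • (XScᵀ * XS) with hB
  rw [infNorm_eq_norm] at hinc
  -- n ≠ 0
  have hn : (n : ℝ) ≠ 0 := by
    intro h0
    have hA0 : A = 0 := by rw [hA, h0]; simp
    rw [hA0] at hinc
    have h1 : ‖(0 : Matrix {j // j ∈ S} {j // j ∈ S} ℝ) - 1‖ = 1 := by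
      rw [zero_sub, norm_neg, norm_one]
    rw [h1] at hinc
    have := norm_nonneg B
    linarith
  have ht : ‖(1 : Matrix {j // j ∈ S} {j // j ∈ S} ℝ) - A‖ < 1 := by
    rw [norm_sub_rev]
    have := norm_nonneg B
    linarith
  set t := (1 : Matrix {j // j ∈ S} {j // j ∈ S} ℝ) - A with htdef
  have hAt : (1 : Matrix {j // j ∈ S} {j // j ∈ S} ℝ) - t = A := by
    rw [htdef, sub_sub_cancel]
  -- A is a unit with inverse u⁻¹
  haveI : HasSummableGeomSeries (Matrix {j // j ∈ S} {j // j ∈ S} ℝ) := by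
    letI := (Matrix.linftyOpNormedSpace : NormedSpace ℝ (Matrix {j // j ∈ S} {j // j ∈ S} ℝ))
    haveI : CompleteSpace (Matrix {j // j ∈ S} {j // j ∈ S} ℝ) := FiniteDimensional.complete ℝ _
    infer_instance
  let u : (Matrix {j // j ∈ S} {j // j ∈ S} ℝ)ˣ := Units.oneSub t ht
  have huval : (u : Matrix {j // j ∈ S} {j // j ∈ S} ℝ) = A := hAt
  have hAinv : A⁻¹ = ((u⁻¹ : (Matrix {j // j ∈ S} {j // j ∈ S} ℝ)ˣ) :
      Matrix {j // j ∈ S} {j // j ∈ S} ℝ) := by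
    apply Matrix.inv_eq_left_inv
    rw [← huval]
    exact u.inv_mul
  -- norm bound on A⁻¹
  have hinvnorm : ‖A⁻¹‖ ≤ (1 - ‖t‖)⁻¹ := by
    rw [hAinv]
    have hu : ((u⁻¹ : (Matrix {j // j ∈ S} {j // j ∈ S} ℝ)ˣ) :
        Matrix {j // j ∈ S} {j // j ∈ S} ℝ) = ∑' n : ℕ, t ^ n := rfl
    rw [hu]
    have hb := tsum_geometric_le_of_norm_lt_one t ht
    rwa [norm_one, show (1 : ℝ) - 1 + (1 - ‖t‖)⁻¹ = (1 - ‖t‖)⁻¹ by ring] at hb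
  -- rewrite the target matrix
  have hXSA : XSᵀ * XS = (n : ℝ) • A := by
    rw [hA, smul_smul]
    field_simp
    rw [one_smul]
  have hXScB : XScᵀ * XS = (n : ℝ) • B := by
    rw [hB, smul_smul]
    field_simp
    rw [one_smul]
  haveI : Invertible ((n : ℝ)) := invertibleOfNonzero hn
  have hdet : IsUnit A.det := by
    rw [← Matrix.isUnit_iff_isUnit_det]
    exact ⟨u, huval⟩
  have hmain : XScᵀ * XS * (XSᵀ * XS)⁻¹ = B * A⁻¹ := by
    rw [hXScB, hXSA, Matrix.inv_smul (A := A) (k := (n : ℝ)) hdet, Matrix.smul_mul, Matrix.mul_smul,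
      smul_smul, mul_invOf_self, one_smul]
  rw [hmain]
  -- final estimate
  have hsub : ‖B * A⁻¹‖ ≤ ‖B‖ * ‖A⁻¹‖ := Matrix.linfty_opNorm_mul _ _
  have ht' : ‖t‖ = ‖A - 1‖ := by rw [htdef, norm_sub_rev]
  have h1t : 0 < 1 - ‖t‖ := by linarith
  have hBt : ‖B‖ + ‖t‖ ≤ 1 - η := by rw [ht']; exact hinc
  have hBn : (0:ℝ) ≤ ‖B‖ := norm_nonneg _
  have htn : (0:ℝ) ≤ ‖t‖ := norm_nonneg _
  have hAin : (0:ℝ) ≤ ‖A⁻¹‖ := norm_nonneg _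
  calc ‖B * A⁻¹‖ ≤ ‖B‖ * ‖A⁻¹‖ := hsub
    _ ≤ ‖B‖ * (1 - ‖t‖)⁻¹ := by gcongr
    _ ≤ 1 - η := by
        rw [mul_inv_le_iff₀ h1t]
        nlinarith
end

section
/- For a chi-square random variable χ²_n with n degrees of freedom: P(χ²_n/n − 1 < −ε) ≤ exp(−nε²/4) for 0 ≤ ε ≤ 1, and P(χ²_n/n − 1 > ε) ≤ exp(−3nε²/16) for 0 ≤ ε ≤ 1/2. -/
open MeasureTheory ProbabilityTheory
open scoped BigOperators ENNReal NNReal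

section Aux

open Real

private lemma aux_exp_upper {x : ℝ} (h0 : 0 ≤ x) (h1 : x ≤ 1/2) :
    1 + x ≤ Real.exp (x - 3*x^2/8) := by
  have hP : 0 ≤ x - 3*x^2/8 := by nlinarith
  have h := Real.sum_le_exp_of_nonneg hP 5
  simp [Finset.sum_range_succ, Nat.factorial] at h
  have key : (0:ℝ) ≤ 1/8 - 5/24*x - 29/384*x^2 + 1/128*x^3 + 27/1024*x^4
      - 9/1024*x^5 + 27/32768*x^6 := by
    nlinarith [sq_nonneg x, sq_nonneg (1-2*x),
      mul_nonneg h0 (by linarith : (0:ℝ) ≤ 1-2*x),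
      mul_nonneg (mul_nonneg h0 h0) (by linarith : (0:ℝ) ≤ 1-2*x),
      sq_nonneg (x*(1-2*x)), mul_nonneg (mul_nonneg h0 h0) h0,
      pow_le_one₀ h0 (by linarith : x ≤ 1) (n := 4)]
  nlinarith [h, mul_nonneg (mul_nonneg h0 h0) key]

private lemma aux_exp_lower {x : ℝ} (h0 : 0 ≤ x) : 1 - x ≤ Real.exp (-x - x^2/2) := by
  set f : ℝ → ℝ := fun y => Real.exp (-y - y^2/2) - (1 - y) with hf
  have hderiv : ∀ y : ℝ, HasDerivAt f (Real.exp (-y - y^2/2) * (-1 - y) + 1) y := by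
    intro y
    have h1 : HasDerivAt (fun y : ℝ => -y - y^2/2) (-1 - y) y := by
      have := ((hasDerivAt_id y).neg.sub (((hasDerivAt_id y).pow 2).div_const 2))
      simpa [Pi.sub_def, Pi.neg_def] using this
    have h2 := h1.exp
    have h3 : HasDerivAt (fun y : ℝ => 1 - y) (-1) y := by
      simpa using (hasDerivAt_id y).const_sub 1
    simpa [Pi.sub_def, hf] using h2.sub h3
  have mono : MonotoneOn f (Set.Icc 0 x) := by
    apply monotoneOn_of_deriv_nonneg (convex_Icc 0 x)
    · fun_prop
    · intro y hy
      exact (hderiv y).differentiableAt.differentiableWithinAt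
    · intro y hy
      rw [(hderiv y).deriv]
      have hy0 : 0 < y := (Set.mem_Ioo.mp (by rwa [interior_Icc] at hy)).1
      have h4 : (1 + y) * Real.exp (-y - y^2/2) ≤ Real.exp y * Real.exp (-y) := by
        apply mul_le_mul (by linarith [Real.add_one_le_exp y])
          (Real.exp_le_exp.mpr (by nlinarith)) (Real.exp_pos _).le (Real.exp_pos _).le
      rw [← Real.exp_add] at h4
      simp at h4
      nlinarith [Real.exp_pos (-y - y^2/2)]
  have h5 : f 0 ≤ f x := mono (Set.mem_Icc.mpr ⟨le_refl 0, h0⟩) (Set.mem_Icc.mpr ⟨h0, le_refl x⟩) h0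
  simp [hf] at h5
  linarith [h5]

private lemma aux_pdf_mul_eq {t : ℝ} :
    (fun x : ℝ => gaussianPDFReal 0 1 x * Real.exp (t * x^2)) =
      fun x : ℝ => (Real.sqrt (2*π))⁻¹ * Real.exp (-(1/2 - t) * x^2) := by
  funext x
  simp only [gaussianPDFReal_def, NNReal.coe_one, mul_one, sub_zero]
  rw [mul_assoc, ← Real.exp_add]
  ring_nf

private lemma aux_gaussian_sq_integrable {t : ℝ} (ht : t < 1/2) :
    Integrable (fun x : ℝ => Real.exp (t * x^2)) (gaussianReal 0 1) := by
  rw [gaussianReal_of_var_ne_zero 0 one_ne_zero]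
  rw [integrable_withDensity_iff (measurable_gaussianPDF 0 1)
    (Filter.Eventually.of_forall fun x => ENNReal.ofReal_lt_top)]
  have h : (fun x : ℝ => Real.exp (t * x^2) * (gaussianPDF 0 1 x).toReal) =
      fun x : ℝ => (Real.sqrt (2*π))⁻¹ * Real.exp (-(1/2 - t) * x^2) := by
    funext x
    rw [gaussianPDF_def, ENNReal.toReal_ofReal (gaussianPDFReal_nonneg 0 1 x), mul_comm]
    exact congrFun aux_pdf_mul_eq x
  rw [h]
  exact (integrable_exp_neg_mul_sq (by linarith)).const_mul _

private lemma aux_sqrt_algebra {t : ℝ} (ht : t < 1/2) :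
    (Real.sqrt (2*π))⁻¹ * Real.sqrt (π / (1/2 - t)) = (Real.sqrt (1 - 2*t))⁻¹ := by
  have hb : (0:ℝ) < 1/2 - t := by linarith
  have hπ := Real.pi_pos
  rw [show π / (1/2 - t) = (2*π) / (1 - 2*t) by field_simp]
  rw [Real.sqrt_div (by positivity) _]
  rw [div_eq_mul_inv, ← mul_assoc, inv_mul_cancel₀ (by positivity), one_mul]

private lemma aux_gaussian_sq_integral {t : ℝ} (ht : t < 1/2) :
    ∫ x, Real.exp (t * x^2) ∂(gaussianReal 0 1) = (Real.sqrt (1 - 2*t))⁻¹ := by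
  rw [gaussianReal_of_var_ne_zero 0 one_ne_zero]
  have hpdf : (gaussianPDF 0 1) = fun x => ((gaussianPDFReal 0 1 x).toNNReal : ℝ≥0∞) := by
    funext x; rw [gaussianPDF_def]; rfl
  rw [hpdf, integral_withDensity_eq_integral_smul
    ((measurable_gaussianPDFReal 0 1).real_toNNReal)]
  have h : (fun x : ℝ => (gaussianPDFReal 0 1 x).toNNReal • Real.exp (t * x^2)) =
      fun x : ℝ => (Real.sqrt (2*π))⁻¹ * Real.exp (-(1/2 - t) * x^2) := by
    funext x
    rw [NNReal.smul_def, smul_eq_mul, Real.coe_toNNReal _ (gaussianPDFReal_nonneg 0 1 x)]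
    exact congrFun aux_pdf_mul_eq x
  rw [h, integral_const_mul, integral_gaussian]
  exact aux_sqrt_algebra ht

end Aux

/-- Chi-square tail bounds: for `χ²_n = Σ Y_i²` with `Y_i` i.i.d. standard normal,
`P(χ²_n/n − 1 < −ε) ≤ exp(−nε²/4)` for `0 ≤ ε ≤ 1` and
`P(χ²_n/n − 1 > ε) ≤ exp(−3nε²/16)` for `0 ≤ ε ≤ 1/2`. -/
theorem chi_square_tail_bounds {Ω : Type*} [MeasureSpace Ω]
    (hprob : IsProbabilityMeasure (ℙ : Measure Ω))
    {n : ℕ} (hn : 0 < n)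
    (Y : Fin n → Ω → ℝ)
    (hmeas : ∀ i, Measurable (Y i))
    (hindep : iIndepFun Y ℙ)
    (hgauss : ∀ i, Measure.map (Y i) ℙ = gaussianReal 0 1)
    (ε : ℝ) (hε : 0 ≤ ε) :
    (ε ≤ 1 →
      (ℙ {ω | (∑ i, Y i ω ^ 2) / n - 1 < -ε}).toReal ≤
        Real.exp (-(n : ℝ) * ε ^ 2 / 4)) ∧
    (ε ≤ 1 / 2 →
      (ℙ {ω | 1 + ε < (∑ i, Y i ω ^ 2) / n}).toReal ≤
        Real.exp (-(3 : ℝ) * n * ε ^ 2 / 16)) := by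
  haveI := hprob
  set X : Fin n → Ω → ℝ := fun i ω => Y i ω ^ 2 with hX
  have hXmeas : ∀ i, Measurable (X i) := fun i => (hmeas i).pow_const 2
  have hXindep : iIndepFun X ℙ :=
    hindep.comp (fun i x => x ^ 2) (fun i => measurable_id.pow_const 2)
  have hnR : (0:ℝ) < n := Nat.cast_pos.mpr hn
  -- generic facts for any u < 1/2
  have h_int : ∀ u : ℝ, u < 1/2 → ∀ i, Integrable (fun ω => Real.exp (u * X i ω)) ℙ := by
    intro u hu i
    have hgm : Measurable fun x : ℝ => Real.exp (u * x^2) :=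
      ((measurable_id.pow_const 2).const_mul u).exp
    have h2 : Integrable (fun x : ℝ => Real.exp (u * x^2)) (Measure.map (Y i) ℙ) := by
      rw [hgauss i]; exact aux_gaussian_sq_integrable hu
    exact (integrable_map_measure hgm.aestronglyMeasurable (hmeas i).aemeasurable).mp h2
  have h_int_sum : ∀ u : ℝ, u < 1/2 →
      Integrable (fun ω => Real.exp (u * (∑ i, X i) ω)) ℙ := fun u hu =>
    hXindep.integrable_exp_mul_sum hXmeas (fun i _ => h_int u hu i)
  have h_mgf : ∀ u : ℝ, u < 1/2 →
      mgf (∑ i, X i) ℙ u = ((Real.sqrt (1 - 2*u))⁻¹)^n := by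
    intro u hu
    rw [iIndepFun.mgf_sum hXindep hXmeas]
    have hgm : Measurable fun x : ℝ => Real.exp (u * x^2) :=
      ((measurable_id.pow_const 2).const_mul u).exp
    have hmgf1 : ∀ i : Fin n, mgf (X i) ℙ u = (Real.sqrt (1 - 2*u))⁻¹ := by
      intro i
      have h0 : mgf (X i) ℙ u = ∫ ω, Real.exp (u * (Y i ω)^2) ∂ℙ := rfl
      rw [h0, ← integral_map (hmeas i).aemeasurable hgm.aestronglyMeasurable,
        hgauss i, aux_gaussian_sq_integral hu]
    simp [hmgf1]
  constructor
  · -- lower tail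
    intro hε1
    rcases eq_or_lt_of_le hε1 with rfl | hε1
    · -- ε = 1 : empty event
      have hempty : {ω | (∑ i, Y i ω ^ 2) / n - 1 < -(1:ℝ)} = ∅ := by
        ext ω
        simp only [Set.mem_setOf_eq, Set.mem_empty_iff_false, iff_false, not_lt]
        have h0 : (0:ℝ) ≤ (∑ i, Y i ω ^ 2) :=
          Finset.sum_nonneg fun i _ => sq_nonneg _
        have := div_nonneg h0 hnR.le
        linarith
      rw [hempty]
      simp [Real.exp_nonneg]
    · -- ε < 1, Chernoff with u = -(ε/(2(1-ε)))
      have h1ε : (0:ℝ) < 1 - ε := by linarith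
      set u : ℝ := -(ε/(2*(1-ε))) with hu_def
      have hu0 : u ≤ 0 := by
        simp only [hu_def, neg_nonpos]
        positivity
      have hu2 : u < 1/2 := lt_of_le_of_lt hu0 (by norm_num)
      have hsub : {ω | (∑ i, Y i ω ^ 2) / n - 1 < -ε} ⊆
          {ω | (∑ i, X i) ω ≤ (n:ℝ) * (1-ε)} := by
        intro ω hω
        simp only [Set.mem_setOf_eq] at hω ⊢
        have hXω : (∑ i, X i) ω = ∑ i, Y i ω ^ 2 := by
          simp [hX, Finset.sum_apply]
        rw [hXω]
        rw [div_sub' hnR.ne', div_lt_iff₀ hnR] at hω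
        nlinarith
      have hstep := measure_le_le_exp_mul_mgf (μ := ℙ) (X := ∑ i, X i)
        ((n:ℝ) * (1-ε)) hu0 (h_int_sum u hu2)
      have hmono : (ℙ {ω | (∑ i, Y i ω ^ 2) / n - 1 < -ε}).toReal ≤
          (ℙ {ω | (∑ i, X i) ω ≤ (n:ℝ) * (1-ε)}).toReal :=
        ENNReal.toReal_mono (measure_ne_top _ _) (measure_mono hsub)
      refine le_trans (le_trans hmono hstep) ?_
      rw [h_mgf u hu2]
      have h12u : 1 - 2*u = (1-ε)⁻¹ := by
        rw [hu_def]; field_simp; ring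
      rw [h12u, Real.sqrt_inv, inv_inv]
      have hexp_arg : -u * ((n:ℝ) * (1-ε)) = (n:ℝ) * (ε/2) := by
        rw [hu_def]; field_simp
      rw [hexp_arg, Real.exp_nat_mul, ← mul_pow]
      have hper : Real.exp (ε/2) * Real.sqrt (1-ε) ≤ Real.exp (-(ε^2)/4) := by
        have h1 : Real.sqrt (1-ε) ≤ Real.exp ((-ε - ε^2/2)/2) := by
          rw [Real.exp_half]
          exact Real.sqrt_le_sqrt (aux_exp_lower hε)
        calc Real.exp (ε/2) * Real.sqrt (1-ε)
            ≤ Real.exp (ε/2) * Real.exp ((-ε - ε^2/2)/2) :=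
              mul_le_mul_of_nonneg_left h1 (Real.exp_pos _).le
          _ = Real.exp (-(ε^2)/4) := by rw [← Real.exp_add]; congr 1; ring
      calc (Real.exp (ε/2) * Real.sqrt (1-ε))^n
          ≤ (Real.exp (-(ε^2)/4))^n := by
            apply pow_le_pow_left₀ (by positivity) hper
        _ = Real.exp (-(n:ℝ) * ε^2 / 4) := by
            rw [← Real.exp_nat_mul]; congr 1; ring
  · -- upper tail
    intro hε2
    set u : ℝ := ε/(2*(1+ε)) with hu_def
    have h1ε : (0:ℝ) < 1 + ε := by linarith
    have hu0 : 0 ≤ u := by positivity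
    have hu2 : u < 1/2 := by
      rw [hu_def, div_lt_iff₀ (by linarith)]
      nlinarith
    have hsub : {ω | 1 + ε < (∑ i, Y i ω ^ 2) / n} ⊆
        {ω | (n:ℝ) * (1+ε) ≤ (∑ i, X i) ω} := by
      intro ω hω
      simp only [Set.mem_setOf_eq] at hω ⊢
      have hXω : (∑ i, X i) ω = ∑ i, Y i ω ^ 2 := by
        simp [hX, Finset.sum_apply]
      rw [hXω]
      rw [lt_div_iff₀ hnR] at hω
      nlinarith
    have hstep := measure_ge_le_exp_mul_mgf (μ := ℙ) (X := ∑ i, X i)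
      ((n:ℝ) * (1+ε)) hu0 (h_int_sum u hu2)
    have hmono : (ℙ {ω | 1 + ε < (∑ i, Y i ω ^ 2) / n}).toReal ≤
        (ℙ {ω | (n:ℝ) * (1+ε) ≤ (∑ i, X i) ω}).toReal :=
      ENNReal.toReal_mono (measure_ne_top _ _) (measure_mono hsub)
    refine le_trans (le_trans hmono hstep) ?_
    rw [h_mgf u hu2]
    have h12u : 1 - 2*u = (1+ε)⁻¹ := by
      rw [hu_def]; field_simp; ring
    rw [h12u, Real.sqrt_inv, inv_inv]
    have hexp_arg : -u * ((n:ℝ) * (1+ε)) = (n:ℝ) * (-(ε/2)) := by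
      rw [hu_def]; field_simp
    rw [hexp_arg, Real.exp_nat_mul, ← mul_pow]
    have hper : Real.exp (-(ε/2)) * Real.sqrt (1+ε) ≤ Real.exp (-(3*ε^2)/16) := by
      have h1 : Real.sqrt (1+ε) ≤ Real.exp ((ε - 3*ε^2/8)/2) := by
        rw [Real.exp_half]
        exact Real.sqrt_le_sqrt (aux_exp_upper hε hε2)
      calc Real.exp (-(ε/2)) * Real.sqrt (1+ε)
          ≤ Real.exp (-(ε/2)) * Real.exp ((ε - 3*ε^2/8)/2) :=
            mul_le_mul_of_nonneg_left h1 (Real.exp_pos _).le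
        _ = Real.exp (-(3*ε^2)/16) := by rw [← Real.exp_add]; congr 1; ring
    calc (Real.exp (-(ε/2)) * Real.sqrt (1+ε))^n
        ≤ (Real.exp (-(3*ε^2)/16))^n := by
          apply pow_le_pow_left₀ (by positivity) hper
      _ = Real.exp (-(3:ℝ) * n * ε^2 / 16) := by
          rw [← Real.exp_nat_mul]; congr 1; ring
end
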